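/- Let k, r, s, t be positive integers with s ≤ t and 2k ≤ t, and let G be any graph. Let Γ be a G-free graph on N ≥ binom(t,s)^r · (t/(2ks)) · r(G, K_s) vertices which contains K_r(t) as an induced subgraph with parts V_1, …, V_r. If the complement of Γ does not contain any book B_{k,n} with n ≥ (1 − 4ks/t)·N/r vertices, then Γ contains an induced copy of K_{r+1}(s) with parts W_0, W_1, …, W_r where W_i ⊆ V_i for every 1 ≤ i ≤ r. -/

import Mathlib

open SimpleGraph

/-- `ContainsCopy G Γ` : `Γ` contains a (not necessarily induced) copy of `G`. -/
def ContainsCopy {α β : Type*} (G : SimpleGraph α) (Γ : SimpleGraph β) : Prop :=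
  ∃ f : α → β, Function.Injective f ∧ ∀ ⦃a b⦄, G.Adj a b → Γ.Adj (f a) (f b)

/-- The book graph `B_{k,n}`: `n` vertices, the first `k` of which form the spine. -/
def Book (k n : ℕ) : SimpleGraph (Fin n) :=
  SimpleGraph.fromRel (fun a b => (a : ℕ) < k ∨ (b : ℕ) < k)

/-- The Ramsey number `r(G,H)`: the least `N` such that every graph `Γ` on `N` vertices
contains a copy of `G`, or its complement contains a copy of `H`. -/
noncomputable def ramseyNumber {α β : Type*} (G : SimpleGraph α) (H : SimpleGraph β) : ℕ :=
  sInf {N | ∀ Γ : SimpleGraph (Fin N), ContainsCopy G Γ ∨ ContainsCopy H Γᶜ}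

/-- The degree of a vertex. -/
noncomputable def degCount {V : Type*} (Γ : SimpleGraph V) (v : V) : ℕ :=
  (Γ.neighborSet v).ncard

/-- The number of copies of `K_p` in `Γ`, i.e. sets of `p` pairwise adjacent vertices. -/
noncomputable def cliqueCount {V : Type*} (Γ : SimpleGraph V) (p : ℕ) : ℕ :=
  {s : Finset V | Γ.IsNClique p s}.ncard

/-- `Γ` contains an induced copy of the complete multipartite graph with all parts
of size `t`, with parts `P 0, …, P (r-1)`. -/
def IsCompleteMultipartiteIn {V : Type*} (Γ : SimpleGraph V) {r : ℕ} (t : ℕ)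
    (P : Fin r → Finset V) : Prop :=
  (∀ i, (P i).card = t) ∧
  (∀ i j, i ≠ j → Disjoint (P i) (P j)) ∧
  (∀ i, ∀ a ∈ P i, ∀ b ∈ P i, ¬ Γ.Adj a b) ∧
  (∀ i j, i ≠ j → ∀ a ∈ P i, ∀ b ∈ P j, Γ.Adj a b)

/-- The number of edges of `Γ` with both endpoints inside `s`. -/
noncomputable def edgesInside {V : Type*} (Γ : SimpleGraph V) (s : Finset V) : ℕ :=
  {e ∈ Γ.edgeSet | ∀ v ∈ e, v ∈ s}.ncard

open Finset in
/-! ### Auxiliary lemmas -/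

open Finset

lemma copy_top_zero {V : Type*} (Γ : SimpleGraph V) :
    ContainsCopy (⊤ : SimpleGraph (Fin 0)) Γ :=
  ⟨Fin.elim0, fun a => a.elim0, fun a => a.elim0⟩

lemma exists_inj_into {β : Type*} (S : Finset β) (m : ℕ) (h : m ≤ S.card) :
    ∃ g : Fin m → β, Function.Injective g ∧ ∀ j, g j ∈ S := by
  classical
  obtain ⟨T, hTS, hT⟩ := Finset.exists_subset_card_eq (s := S) (n := m) h
  refine ⟨fun j => (T.equivFin.symm (Fin.cast hT.symm j)).val, ?_,
    fun j => hTS (T.equivFin.symm _).2⟩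
  intro a b hab
  have := T.equivFin.symm.injective (Subtype.ext hab)
  simpa [Fin.ext_iff] using this
lemma exists_ramsey_bound : ∀ (p m n : ℕ), m + n ≤ p → ∃ N : ℕ,
    ∀ (V : Type) (Γ : SimpleGraph V) (_e : Fin N ↪ V),
      ContainsCopy (⊤ : SimpleGraph (Fin m)) Γ ∨ ContainsCopy (⊤ : SimpleGraph (Fin n)) Γᶜ := by
  intro p
  induction p with
  | zero =>
    intro m n h
    have hm : m = 0 := by omega
    exact ⟨0, fun V Γ _ => Or.inl (hm ▸ copy_top_zero Γ)⟩
  | succ p ih =>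
    intro m n h
    match m, n with
    | 0, n => exact ⟨0, fun V Γ _ => Or.inl (copy_top_zero Γ)⟩
    | m+1, 0 => exact ⟨0, fun V Γ _ => Or.inr (copy_top_zero Γᶜ)⟩
    | m+1, n+1 =>
      obtain ⟨N₁, h₁⟩ := ih m (n+1) (by omega)
      obtain ⟨N₂, h₂⟩ := ih (m+1) n (by omega)
      refine ⟨N₁ + N₂ + 1, ?_⟩
      intro V Γ e
      classical
      set v : V := e (Fin.last (N₁ + N₂)) with hv
      have hcard : (univ.filter (fun i : Fin (N₁+N₂) => Γ.Adj v (e i.castSucc))).card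
          + (univ.filter (fun i : Fin (N₁+N₂) => ¬ Γ.Adj v (e i.castSucc))).card = N₁ + N₂ := by
        rw [Finset.card_filter_add_card_filter_not]
        simp
      rcases le_or_gt N₁ (univ.filter (fun i : Fin (N₁+N₂) => Γ.Adj v (e i.castSucc))).card with hS | hS
      · -- many neighbours of v
        obtain ⟨g, ginj, gmem⟩ := exists_inj_into _ N₁ hS
        have gadj : ∀ j, Γ.Adj v (e (g j).castSucc) := by
          intro j; have := gmem j; simp only [Finset.mem_filter] at this; exact this.2
        let e₁ : Fin N₁ ↪ {u : V // Γ.Adj v u} :=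
          ⟨fun j => ⟨e (g j).castSucc, gadj j⟩, by
            intro a b hab
            exact ginj (Fin.castSucc_injective _ (e.injective (congrArg Subtype.val hab)))⟩
        rcases h₁ {u : V // Γ.Adj v u} (Γ.comap Subtype.val) e₁ with ⟨f, finj, fadj⟩ | ⟨f, finj, fadj⟩
        · -- clique of size m in nbhd; extend by v
          left
          refine ⟨Fin.snoc (fun j => (f j).val) v, ?_, ?_⟩
          · intro a b hab
            induction a using Fin.lastCases with
            | last =>
              induction b using Fin.lastCases with
              | last => rfl
              | cast b =>
                rw [Fin.snoc_last, Fin.snoc_castSucc] at hab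
                exact absurd hab.symm (f b).2.ne'
            | cast a =>
              induction b using Fin.lastCases with
              | last =>
                rw [Fin.snoc_last, Fin.snoc_castSucc] at hab
                exact absurd hab (f a).2.ne'
              | cast b =>
                rw [Fin.snoc_castSucc, Fin.snoc_castSucc] at hab
                exact congrArg Fin.castSucc (finj (Subtype.ext hab))
          · intro a b hab
            have hne : a ≠ b := hab.ne
            induction a using Fin.lastCases with
            | last =>
              induction b using Fin.lastCases with
              | last => exact absurd rfl hne
              | cast b => rw [Fin.snoc_last, Fin.snoc_castSucc]; exact (f b).2
            | cast a =>
              induction b using Fin.lastCases with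
              | last => rw [Fin.snoc_last, Fin.snoc_castSucc]; exact (f a).2.symm
              | cast b =>
                rw [Fin.snoc_castSucc, Fin.snoc_castSucc]
                have : a ≠ b := fun hc => hne (by rw [hc])
                have : (⊤ : SimpleGraph (Fin m)).Adj a b := by simpa [top_adj] using this
                exact fadj this
        · -- independent set of size n+1
          right
          refine ⟨fun j => (f j).val, fun a b hab => finj (Subtype.ext hab), ?_⟩
          intro a b hab
          have := fadj hab
          simp only [compl_adj, comap_adj] at this ⊢
          exact ⟨fun hc => this.1 (Subtype.ext hc), this.2⟩
      · -- many non-neighbours of v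
        have hS' : N₂ ≤ (univ.filter (fun i : Fin (N₁+N₂) => ¬ Γ.Adj v (e i.castSucc))).card := by omega
        obtain ⟨g, ginj, gmem⟩ := exists_inj_into _ N₂ hS'
        have gadj : ∀ j, ¬ Γ.Adj v (e (g j).castSucc) := by
          intro j; have := gmem j; simp only [Finset.mem_filter] at this; exact this.2
        have gne : ∀ j, e (g j).castSucc ≠ v := by
          intro j hc
          have := e.injective hc
          exact absurd (congrArg Fin.val this) (by simp [Fin.ext_iff]; omega)
        let e₂ : Fin N₂ ↪ {u : V // ¬ Γ.Adj v u ∧ u ≠ v} :=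
          ⟨fun j => ⟨e (g j).castSucc, gadj j, gne j⟩, by
            intro a b hab
            exact ginj (Fin.castSucc_injective _ (e.injective (congrArg Subtype.val hab)))⟩
        rcases h₂ {u : V // ¬ Γ.Adj v u ∧ u ≠ v} (Γ.comap Subtype.val) e₂ with ⟨f, finj, fadj⟩ | ⟨f, finj, fadj⟩
        · left
          refine ⟨fun j => (f j).val, fun a b hab => finj (Subtype.ext hab), ?_⟩
          intro a b hab
          exact fadj hab
        · right
          refine ⟨Fin.snoc (fun j => (f j).val) v, ?_, ?_⟩
          · intro a b hab
            induction a using Fin.lastCases with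
            | last =>
              induction b using Fin.lastCases with
              | last => rfl
              | cast b =>
                rw [Fin.snoc_last, Fin.snoc_castSucc] at hab
                exact absurd hab.symm (f b).2.2
            | cast a =>
              induction b using Fin.lastCases with
              | last =>
                rw [Fin.snoc_last, Fin.snoc_castSucc] at hab
                exact absurd hab (f a).2.2
              | cast b =>
                rw [Fin.snoc_castSucc, Fin.snoc_castSucc] at hab
                exact congrArg Fin.castSucc (finj (Subtype.ext hab))
          · intro a b hab
            have hne : a ≠ b := hab.ne
            induction a using Fin.lastCases with
            | last =>
              induction b using Fin.lastCases with
              | last => exact absurd rfl hne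
              | cast b =>
                rw [Fin.snoc_last, Fin.snoc_castSucc]
                simp only [compl_adj]
                exact ⟨Ne.symm (f b).2.2, (f b).2.1⟩
            | cast a =>
              induction b using Fin.lastCases with
              | last =>
                rw [Fin.snoc_last, Fin.snoc_castSucc]
                simp only [compl_adj]
                exact ⟨(f a).2.2, fun hc => (f a).2.1 hc.symm⟩
              | cast b =>
                rw [Fin.snoc_castSucc, Fin.snoc_castSucc]
                have hab' : a ≠ b := fun hc => hne (by rw [hc])
                have := fadj (show (⊤ : SimpleGraph (Fin n)).Adj a b by simpa [top_adj] using hab')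
                simp only [compl_adj, comap_adj] at this ⊢
                exact ⟨fun hc => this.1 (Subtype.ext hc), this.2⟩

lemma ramsey_prop {α : Type*} [Fintype α] (G : SimpleGraph α) (s : ℕ) :
    ∀ Γ : SimpleGraph (Fin (ramseyNumber G (⊤ : SimpleGraph (Fin s)))),
      ContainsCopy G Γ ∨ ContainsCopy (⊤ : SimpleGraph (Fin s)) Γᶜ := by
  have hne : {N | ∀ Γ : SimpleGraph (Fin N),
      ContainsCopy G Γ ∨ ContainsCopy (⊤ : SimpleGraph (Fin s)) Γᶜ}.Nonempty := by
    obtain ⟨N₀, h⟩ := exists_ramsey_bound (Fintype.card α + s) (Fintype.card α) s le_rfl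
    refine ⟨N₀, fun Γ => ?_⟩
    rcases h (Fin N₀) Γ (Function.Embedding.refl _) with ⟨f, finj, fadj⟩ | h2
    · left
      refine ⟨f ∘ (Fintype.equivFin α), finj.comp (Fintype.equivFin α).injective, ?_⟩
      intro a b hab
      exact fadj (by simpa [top_adj] using fun hc => hab.ne ((Fintype.equivFin α).injective hc))
    · exact Or.inr h2
  exact Nat.sInf_mem hne

lemma ramsey_apply {α V : Type*} [Fintype α] (G : SimpleGraph α) (s : ℕ)
    (Γ : SimpleGraph V) (hfree : ¬ ContainsCopy G Γ) (U : Finset V)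
    (hU : ramseyNumber G (⊤ : SimpleGraph (Fin s)) ≤ U.card) :
    ∃ w : Fin s → V, Function.Injective w ∧ (∀ j, w j ∈ U) ∧
      ∀ a b, a ≠ b → ¬ Γ.Adj (w a) (w b) := by
  obtain ⟨g, ginj, gmem⟩ := exists_inj_into U _ hU
  rcases ramsey_prop G s (Γ.comap g) with ⟨f, finj, fadj⟩ | ⟨f, finj, fadj⟩
  · exact absurd ⟨g ∘ f, ginj.comp finj, fun a b hab => fadj hab⟩ hfree
  · refine ⟨g ∘ f, ginj.comp finj, fun j => gmem _, ?_⟩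
    intro a b hab
    have := fadj (show (⊤ : SimpleGraph (Fin s)).Adj a b by simpa [top_adj] using hab)
    simp only [compl_adj, comap_adj] at this
    exact this.2
lemma choose_ratio (t s k : ℕ) (hk : 1 ≤ k) (hkt : 2*k ≤ t) (hskt : s + k ≤ t) :
    (1 - 2*k*s/(t:ℝ)) * (t.choose k : ℝ) ≤ ((t - s).choose k : ℝ) := by
  have htk0 : (0:ℝ) < (t:ℝ) - k := by
    have : k < t := by omega
    have := (Nat.cast_lt (α := ℝ)).2 this
    linarith
  have ht0 : (0:ℝ) < t := by exact_mod_cast (by omega : 0 < t)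
  set x : ℝ := (s:ℝ) / ((t:ℝ) - k) with hxdef
  have hx0 : (0:ℝ) ≤ x := by positivity
  have hxs : x * ((t:ℝ) - k) = s := div_mul_cancel₀ _ (ne_of_gt htk0)
  have key : ∀ j, j ≤ k → (1 - j*x) * (t.choose j : ℝ) ≤ ((t - s).choose j : ℝ) := by
    intro j
    induction j with
    | zero => intro _; simp
    | succ j ihj =>
      intro hjk
      have ihj' := ihj (by omega)
      by_cases hneg : 1 - ((j:ℝ)+1)*x ≤ 0
      · have : (0:ℝ) ≤ ((t-s).choose (j+1) : ℝ) := by positivity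
        push_cast
        nlinarith [Nat.cast_nonneg (α := ℝ) (t.choose (j+1))]
      push_neg at hneg
      have hjt : j ≤ t := by omega
      have hjts : j ≤ t - s := by omega
      have hrt : (t.choose (j+1) : ℝ) * ((j:ℝ)+1) = (t.choose j : ℝ) * ((t:ℝ) - j) := by
        have := Nat.choose_succ_right_eq t j
        have h2 : ((t.choose (j+1) * (j+1) : ℕ) : ℝ) = ((t.choose j * (t - j) : ℕ) : ℝ) := by
          rw [this]
        push_cast [Nat.cast_sub hjt] at h2
        convert h2 using 2 <;> push_cast <;> ring
      have hrts : (((t-s).choose (j+1) : ℝ)) * ((j:ℝ)+1) = ((t-s).choose j : ℝ) * ((t:ℝ) - s - j) := by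
        have := Nat.choose_succ_right_eq (t - s) j
        have h2 : (((t-s).choose (j+1) * (j+1) : ℕ) : ℝ) = (((t-s).choose j * ((t-s) - j) : ℕ) : ℝ) := by
          rw [this]
        push_cast [Nat.cast_sub hjts, Nat.cast_sub (show s ≤ t by omega)] at h2
        convert h2 using 2 <;> push_cast <;> ring
      have hj1 : (0:ℝ) < (j:ℝ) + 1 := by positivity
      rw [← mul_le_mul_iff_of_pos_right hj1]
      push_cast
      have goal2 : (1 - ((j:ℝ)+1)*x) * ((t.choose j : ℝ) * ((t:ℝ) - j)) ≤
          ((t-s).choose j : ℝ) * ((t:ℝ) - s - j) := by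
        have hCt0 : (0:ℝ) ≤ (t.choose j : ℝ) := by positivity
        have hstep : (1 - ((j:ℝ)+1)*x) * ((t:ℝ) - j) ≤ (1 - (j:ℝ)*x) * ((t:ℝ) - s - j) := by
          have hxt : (s:ℝ) ≤ x * ((t:ℝ) - j) := by
            have : (t:ℝ) - k ≤ (t:ℝ) - j := by
              have : (j:ℝ) ≤ k := by exact_mod_cast (by omega : j ≤ k)
              linarith
            nlinarith
          nlinarith [mul_nonneg (mul_nonneg (Nat.cast_nonneg (α := ℝ) j) hx0) (Nat.cast_nonneg (α := ℝ) s)]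
        have htsj : (0:ℝ) ≤ (t:ℝ) - s - j := by
          have h1 : ((j:ℝ)) ≤ ((t - s : ℕ) : ℝ) := by exact_mod_cast hjts
          rw [Nat.cast_sub (show s ≤ t by omega)] at h1
          linarith
        calc (1 - ((j:ℝ)+1)*x) * ((t.choose j : ℝ) * ((t:ℝ) - j))
            = ((1 - ((j:ℝ)+1)*x) * ((t:ℝ) - j)) * (t.choose j : ℝ) := by ring
          _ ≤ ((1 - (j:ℝ)*x) * ((t:ℝ) - s - j)) * (t.choose j : ℝ) := by
              exact mul_le_mul_of_nonneg_right hstep hCt0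
          _ = ((1 - (j:ℝ)*x) * (t.choose j : ℝ)) * ((t:ℝ) - s - j) := by ring
          _ ≤ ((t-s).choose j : ℝ) * ((t:ℝ) - s - j) := by
              exact mul_le_mul_of_nonneg_right ihj' htsj
      calc (1 - ((j:ℕ)+1:ℝ)*x) * (t.choose (j+1) : ℝ) * ((j:ℝ)+1)
          = (1 - ((j:ℝ)+1)*x) * ((t.choose (j+1) : ℝ) * ((j:ℝ)+1)) := by push_cast; ring
        _ = (1 - ((j:ℝ)+1)*x) * ((t.choose j : ℝ) * ((t:ℝ) - j)) := by rw [hrt]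
        _ ≤ ((t-s).choose j : ℝ) * ((t:ℝ) - s - j) := goal2
        _ = ((t-s).choose (j+1) : ℝ) * ((j:ℝ)+1) := hrts.symm
  have hfin := key k le_rfl
  have hcomp : 1 - 2*(k:ℝ)*s/(t:ℝ) ≤ 1 - (k:ℝ)*x := by
    have hkx : (k:ℝ)*x ≤ 2*(k:ℝ)*s/(t:ℝ) := by
      have hrw : (k:ℝ) * ((s:ℝ)/((t:ℝ)-k)) = ((k:ℝ)*s)/((t:ℝ)-k) := by ring
      rw [hxdef, hrw, div_le_div_iff₀ htk0 ht0]
      have hk0 : (0:ℝ) ≤ (k:ℝ) := Nat.cast_nonneg k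
      have h2kt : 2*(k:ℝ) ≤ t := by exact_mod_cast hkt
      nlinarith [mul_nonneg hk0 (Nat.cast_nonneg (α := ℝ) s)]
    linarith
  calc (1 - 2*(k:ℝ)*s/(t:ℝ)) * (t.choose k : ℝ)
      ≤ (1 - (k:ℝ)*x) * (t.choose k : ℝ) :=
        mul_le_mul_of_nonneg_right hcomp (by positivity)
    _ ≤ ((t - s).choose k : ℝ) := hfin

set_option maxHeartbeats 2000000 in
theorem greedy_embedding_lemma (k r s t : ℕ) (hk : 1 ≤ k) (hr : 1 ≤ r) (hs : 1 ≤ s)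
    (hst : s ≤ t) (hkt : 2 * k ≤ t)
    {α : Type*} [Fintype α] (G : SimpleGraph α)
    (N : ℕ)
    (hN : ((t.choose s : ℝ)) ^ r * ((t : ℝ) / (2 * k * s))
        * (ramseyNumber G (⊤ : SimpleGraph (Fin s)) : ℝ) ≤ (N : ℝ))
    (Γ : SimpleGraph (Fin N)) (hfree : ¬ ContainsCopy G Γ)
    (V : Fin r → Finset (Fin N)) (hV : IsCompleteMultipartiteIn Γ t V)
    (hbook : ∀ n : ℕ, (1 - 4 * k * s / (t : ℝ)) * N / r ≤ (n : ℝ) →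
      ¬ ContainsCopy (Book k n) Γᶜ) :
    ∃ W : Fin (r + 1) → Finset (Fin N),
      IsCompleteMultipartiteIn Γ s W ∧ ∀ i : Fin r, W i.succ ⊆ V i := by
  classical
  obtain ⟨hVcard, hVdisj, hVind, hVadj⟩ := hV
  have ht0 : 0 < t := by omega
  have htR : (0:ℝ) < t := by exact_mod_cast ht0
  have hrR : (0:ℝ) < r := by exact_mod_cast hr
  have hkR : (0:ℝ) < k := by exact_mod_cast hk
  have hsR : (0:ℝ) < s := by exact_mod_cast hs
  -- trivial case: t ≤ 4ks
  by_cases hcase : t ≤ 4*k*s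
  · exfalso
    set i0 : Fin r := ⟨0, hr⟩ with hi0
    have hcopy : ContainsCopy (Book k t) Γᶜ := by
      obtain ⟨g, ginj, gmem⟩ := exists_inj_into (V i0) t (le_of_eq (hVcard i0).symm)
      refine ⟨g, ginj, ?_⟩
      intro a b hab
      have hne : a ≠ b := hab.ne
      simp only [compl_adj]
      exact ⟨fun hc => hne (ginj hc), hVind i0 _ (gmem a) _ (gmem b)⟩
    refine hbook t ?_ hcopy
    have h1 : (1 - 4*(k:ℝ)*s/(t:ℝ)) ≤ 0 := by
      rw [sub_nonpos, le_div_iff₀ htR]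
      have : (t:ℝ) ≤ 4*(k:ℝ)*s := by exact_mod_cast hcase
      linarith
    have h2 : (1 - 4*(k:ℝ)*s/(t:ℝ)) * N ≤ 0 :=
      mul_nonpos_of_nonpos_of_nonneg h1 (Nat.cast_nonneg N)
    have := div_nonpos_of_nonpos_of_nonneg h2 (le_of_lt hrR)
    calc (1 - 4*(k:ℝ)*s/(t:ℝ)) * N / r ≤ 0 := this
      _ ≤ (t:ℝ) := le_of_lt htR
  push_neg at hcase
  have hcase' : 4*(k*s) < t := by rw [← mul_assoc]; exact hcase
  have h1ks : s ≤ k*s := Nat.le_mul_of_pos_left s hk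
  have h2ks : k ≤ k*s := Nat.le_mul_of_pos_right k hs
  have hskt : s + k ≤ t := by omega
  have h2kst : 2*(k:ℝ)*s < t := by
    have h3 : 2*(k*s) < t := by omega
    have h4 := (Nat.cast_lt (α := ℝ)).2 h3
    push_cast at h4
    linarith
  have hfrac_pos : (0:ℝ) < 1 - 2*(k:ℝ)*s/t := by
    rw [sub_pos, div_lt_one htR]; exact h2kst
  -- the neighbourhood of u in V i
  set A : Fin r → Fin N → Finset (Fin N) := fun i u => (V i).filter (fun v => Γ.Adj u v) with hA
  set B : Fin r → Finset (Fin N) := fun i => univ.filter (fun u => (A i u).card < s) with hB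
  set U : Finset (Fin N) := univ.filter (fun u => ∀ i, s ≤ (A i u).card) with hUdef
  -- Step A: each bad set is small
  have stepA : ∀ i, ((B i).card : ℝ) ≤ (1 - 2*(k:ℝ)*s/t) * N / r := by
    intro i
    by_contra hcon
    push_neg at hcon
    set M : Fin N → Finset (Fin N) := fun u => (V i).filter (fun v => u ≠ v ∧ ¬ Γ.Adj u v) with hM
    have hMsub : ∀ u, M u ⊆ V i := fun u => filter_subset _ _
    have hMcard : ∀ u ∈ B i, t - s ≤ (M u).card := by
      intro u hu
      by_cases huV : u ∈ V i
      · have hsub : (V i).erase u ⊆ M u := by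
          intro v hv
          rw [Finset.mem_erase] at hv
          exact Finset.mem_filter.2 ⟨hv.2, fun hc => hv.1 hc.symm, hVind i u huV v hv.2⟩
        have := Finset.card_le_card hsub
        rw [Finset.card_erase_of_mem huV, hVcard i] at this
        omega
      · have hsub : V i \ (A i u) ⊆ M u := by
          intro v hv
          rw [Finset.mem_sdiff] at hv
          refine Finset.mem_filter.2 ⟨hv.1, fun hc => huV (hc ▸ hv.1), fun hc => hv.2 ?_⟩
          exact Finset.mem_filter.2 ⟨hv.1, hc⟩
        have h1 := Finset.card_le_card hsub
        have h2 : (V i \ A i u).card = t - (A i u).card := by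
          rw [Finset.card_sdiff_of_subset (filter_subset _ _), hVcard i]
        have h3 : (A i u).card < s := by
          have := (Finset.mem_filter.1 hu).2
          exact this
        omega
    -- double counting
    have hswap : ∑ K ∈ (V i).powersetCard k, ((B i).filter (fun u => K ⊆ M u)).card
        = ∑ u ∈ B i, ((M u).powersetCard k).card := by
      calc ∑ K ∈ (V i).powersetCard k, ((B i).filter (fun u => K ⊆ M u)).card
          = ∑ K ∈ (V i).powersetCard k, ∑ u ∈ B i, if K ⊆ M u then 1 else 0 := by
            refine Finset.sum_congr rfl fun K _ => ?_
            rw [Finset.card_filter]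
        _ = ∑ u ∈ B i, ∑ K ∈ (V i).powersetCard k, if K ⊆ M u then 1 else 0 :=
            Finset.sum_comm
        _ = ∑ u ∈ B i, (((V i).powersetCard k).filter (fun K => K ⊆ M u)).card := by
            refine Finset.sum_congr rfl fun u _ => ?_
            rw [Finset.card_filter]
        _ = ∑ u ∈ B i, ((M u).powersetCard k).card := by
            refine Finset.sum_congr rfl fun u _ => ?_
            congr 1
            ext K
            simp only [Finset.mem_filter, Finset.mem_powersetCard]
            constructor
            · rintro ⟨⟨_, hc⟩, hKM⟩; exact ⟨hKM, hc⟩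
            · rintro ⟨hKM, hc⟩; exact ⟨⟨hKM.trans (hMsub u), hc⟩, hKM⟩
    have hsum : (B i).card * (t - s).choose k ≤
        ∑ K ∈ (V i).powersetCard k, ((B i).filter (fun u => K ⊆ M u)).card := by
      rw [hswap]
      calc (B i).card * (t - s).choose k = ∑ _u ∈ B i, (t - s).choose k := by
            rw [Finset.sum_const, smul_eq_mul]
        _ ≤ ∑ u ∈ B i, ((M u).powersetCard k).card := by
            refine Finset.sum_le_sum fun u hu => ?_
            rw [Finset.card_powersetCard]
            exact Nat.choose_le_choose k (hMcard u hu)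
    have hpcne : ((V i).powersetCard k).Nonempty := by
      rw [Finset.powersetCard_nonempty]
      rw [hVcard i]; omega
    obtain ⟨K, hKmem, hKmax⟩ := Finset.exists_max_image ((V i).powersetCard k)
      (fun K => ((B i).filter (fun u => K ⊆ M u)).card) hpcne
    set P := (B i).filter (fun u => K ⊆ M u) with hP
    have hbound : (B i).card * (t - s).choose k ≤ t.choose k * P.card := by
      refine hsum.trans ?_
      calc ∑ K' ∈ (V i).powersetCard k, ((B i).filter (fun u => K' ⊆ M u)).card
          ≤ ∑ _K' ∈ (V i).powersetCard k, P.card :=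
            Finset.sum_le_sum fun K' hK' => hKmax K' hK'
        _ = t.choose k * P.card := by
            rw [Finset.sum_const, smul_eq_mul, Finset.card_powersetCard, hVcard i]
    obtain ⟨hKsub, hKcard⟩ := Finset.mem_powersetCard.1 hKmem
    have hPK : ∀ u ∈ P, u ∉ K := by
      intro u hu hc
      have := (Finset.mem_filter.1 hu).2 hc
      exact (Finset.mem_filter.1 this).2.1 rfl
    -- build the book
    obtain ⟨gK, gKinj, gKmem⟩ := exists_inj_into K k (le_of_eq hKcard.symm)
    obtain ⟨gP, gPinj, gPmem⟩ := exists_inj_into P P.card le_rfl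
    set F : Fin (k + P.card) → Fin N := fun a =>
      if h : (a:ℕ) < k then gK ⟨a, h⟩ else gP ⟨(a:ℕ) - k, by have := a.isLt; omega⟩ with hF
    have hFinj : Function.Injective F := by
      intro a b hab
      simp only [hF] at hab
      by_cases ha : (a:ℕ) < k <;> by_cases hb : (b:ℕ) < k
      · rw [dif_pos ha, dif_pos hb] at hab
        have := gKinj hab
        simpa [Fin.ext_iff] using congrArg Fin.val this
      · rw [dif_pos ha, dif_neg hb] at hab
        exact absurd (hab ▸ gKmem ⟨a, ha⟩) (hPK _ (gPmem _))
      · rw [dif_neg ha, dif_pos hb] at hab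
        exact absurd (hab ▸ gPmem _) fun hc => hPK _ hc (gKmem ⟨b, hb⟩)
      · rw [dif_neg ha, dif_neg hb] at hab
        have := gPinj hab
        have h2 := congrArg Fin.val this
        simp only at h2
        have := a.isLt; have := b.isLt
        apply Fin.ext; omega
    have hFnadj : ∀ a b : Fin (k + P.card), (a:ℕ) < k → ¬ Γ.Adj (F a) (F b) := by
      intro a b ha
      have hFa : F a ∈ K := by simp only [hF, dif_pos ha]; exact gKmem _
      by_cases hb : (b:ℕ) < k
      · have hFb : F b ∈ K := by simp only [hF, dif_pos hb]; exact gKmem _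
        exact hVind i _ (hKsub hFa) _ (hKsub hFb)
      · have hFb : F b ∈ P := by simp only [hF, dif_neg hb]; exact gPmem _
        have hKM : K ⊆ M (F b) := (Finset.mem_filter.1 hFb).2
        have := (Finset.mem_filter.1 (hKM hFa)).2
        exact fun hc => this.2 hc.symm
    have hcopy : ContainsCopy (Book k (k + P.card)) Γᶜ := by
      refine ⟨F, hFinj, ?_⟩
      intro a b hab
      rw [Book, fromRel_adj] at hab
      obtain ⟨hne, hor⟩ := hab
      have hlt : (a:ℕ) < k ∨ (b:ℕ) < k := by tauto
      simp only [compl_adj]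
      refine ⟨fun hc => hne (hFinj hc), ?_⟩
      rcases hlt with h | h
      · exact hFnadj a b h
      · exact fun hc => hFnadj b a h hc.symm
    refine hbook (k + P.card) ?_ hcopy
    -- numeric chain
    have hC2pos : (0:ℝ) < (t.choose k : ℝ) := by
      exact_mod_cast Nat.choose_pos (by omega : k ≤ t)
    have hratio : (1 - 2*(k:ℝ)*s/t) ≤ ((t - s).choose k : ℝ) / (t.choose k : ℝ) :=
      (le_div_iff₀ hC2pos).2 (choose_ratio t s k hk hkt hskt)
    have hboundR : ((B i).card : ℝ) * ((t - s).choose k : ℝ) ≤ (t.choose k : ℝ) * P.card := by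
      exact_mod_cast hbound
    have hPa : ((B i).card : ℝ) * (((t - s).choose k : ℝ) / (t.choose k : ℝ)) ≤ (P.card : ℝ) := by
      calc ((B i).card : ℝ) * (((t - s).choose k : ℝ) / (t.choose k : ℝ))
          = ((B i).card : ℝ) * ((t - s).choose k : ℝ) / (t.choose k : ℝ) := by ring
        _ ≤ ((t.choose k : ℝ) * (P.card : ℝ)) / (t.choose k : ℝ) :=
            (div_le_div_iff_of_pos_right hC2pos).2 hboundR
        _ = (P.card : ℝ) := by field_simp
    have hsq : (1 - 4*(k:ℝ)*s/t) ≤ (1 - 2*(k:ℝ)*s/t)^2 := by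
      have hexp : (1 - 2*(k:ℝ)*s/(t:ℝ))^2 = 1 - 4*(k:ℝ)*s/(t:ℝ) + (2*(k:ℝ)*s/(t:ℝ))^2 := by
        ring
      have h0 : (0:ℝ) ≤ (2*(k:ℝ)*s/(t:ℝ))^2 := sq_nonneg _
      linarith
    have hNr : (0:ℝ) ≤ (N:ℝ)/r := by positivity
    calc (1 - 4*(k:ℝ)*s/t) * N / r
        ≤ (1 - 2*(k:ℝ)*s/t)^2 * N / r := by
          rw [show (1 - 4*(k:ℝ)*s/(t:ℝ)) * N / r = (1 - 4*(k:ℝ)*s/(t:ℝ)) * ((N:ℝ)/r) from by ring,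
            show (1 - 2*(k:ℝ)*s/t)^2 * N / r = (1 - 2*(k:ℝ)*s/t)^2 * ((N:ℝ)/r) from by ring]
          exact mul_le_mul_of_nonneg_right hsq hNr
      _ = (1 - 2*(k:ℝ)*s/t) * ((1 - 2*(k:ℝ)*s/t) * N / r) := by ring
      _ ≤ (1 - 2*(k:ℝ)*s/t) * ((B i).card : ℝ) :=
          mul_le_mul_of_nonneg_left (le_of_lt hcon) (le_of_lt hfrac_pos)
      _ ≤ (((t - s).choose k : ℝ) / (t.choose k : ℝ)) * ((B i).card : ℝ) :=
          mul_le_mul_of_nonneg_right hratio (Nat.cast_nonneg _)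
      _ = ((B i).card : ℝ) * (((t - s).choose k : ℝ) / (t.choose k : ℝ)) := by ring
      _ ≤ (P.card : ℝ) := hPa
      _ ≤ ((k + P.card : ℕ) : ℝ) := by push_cast; linarith [hkR]
  -- Step B: U is large
  have hcover : (univ : Finset (Fin N)) ⊆ U ∪ univ.biUnion (fun i => B i) := by
    intro u _
    rw [Finset.mem_union]
    by_cases h : ∀ i, s ≤ (A i u).card
    · exact Or.inl (Finset.mem_filter.2 ⟨Finset.mem_univ u, h⟩)
    · push_neg at h
      obtain ⟨i, hi⟩ := h
      exact Or.inr (Finset.mem_biUnion.2 ⟨i, Finset.mem_univ i,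
        Finset.mem_filter.2 ⟨Finset.mem_univ u, hi⟩⟩)
  have hcardN : (N:ℝ) ≤ (U.card : ℝ) + ∑ i : Fin r, ((B i).card : ℝ) := by
    have h1 : N ≤ U.card + ∑ i : Fin r, (B i).card := by
      calc N = (univ : Finset (Fin N)).card := by simp
        _ ≤ (U ∪ univ.biUnion (fun i => B i)).card := Finset.card_le_card hcover
        _ ≤ U.card + (univ.biUnion (fun i => B i)).card := Finset.card_union_le _ _
        _ ≤ U.card + ∑ i : Fin r, (B i).card :=
            Nat.add_le_add_left (Finset.card_biUnion_le) _
    exact_mod_cast h1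
  have hUlower : 2*(k:ℝ)*s/t * N ≤ (U.card : ℝ) := by
    have hsumB : ∑ i : Fin r, ((B i).card : ℝ) ≤ (1 - 2*(k:ℝ)*s/t) * N := by
      calc ∑ i : Fin r, ((B i).card : ℝ)
          ≤ ∑ _i : Fin r, (1 - 2*(k:ℝ)*s/t) * N / r :=
            Finset.sum_le_sum fun i _ => stepA i
        _ = r * ((1 - 2*(k:ℝ)*s/t) * N / r) := by
            rw [Finset.sum_const, card_univ, Fintype.card_fin, nsmul_eq_mul]
        _ = (1 - 2*(k:ℝ)*s/t) * N := by
            rw [mul_comm]; exact div_mul_cancel₀ _ (ne_of_gt hrR)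
    have hexp : 2*(k:ℝ)*s/t * N = N - (1 - 2*(k:ℝ)*s/t) * N := by ring
    linarith
  have hUR : (t.choose s)^r * ramseyNumber G (⊤ : SimpleGraph (Fin s)) ≤ U.card := by
    have hkey : ((t.choose s : ℝ))^r * (ramseyNumber G (⊤ : SimpleGraph (Fin s)) : ℝ)
        ≤ 2*(k:ℝ)*s/t * N := by
      have hM : (0:ℝ) < 2*(k:ℝ)*s/t := by positivity
      have hmul := mul_le_mul_of_nonneg_left hN (le_of_lt hM)
      have ht' : (t:ℝ) ≠ 0 := ne_of_gt htR
      have hks' : 2*(k:ℝ)*s ≠ 0 := by positivity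
      have hone : 2*(k:ℝ)*s/t * ((t:ℝ)/(2*(k:ℝ)*s)) = 1 := by field_simp
      calc ((t.choose s : ℝ))^r * (ramseyNumber G (⊤ : SimpleGraph (Fin s)) : ℝ)
          = (2*(k:ℝ)*s/t * ((t:ℝ)/(2*(k:ℝ)*s))) *
            (((t.choose s : ℝ))^r * (ramseyNumber G (⊤ : SimpleGraph (Fin s)) : ℝ)) := by
            rw [hone, one_mul]
        _ = 2*(k:ℝ)*s/t * (((t.choose s : ℝ)) ^ r * ((t : ℝ) / (2 * k * s))
            * (ramseyNumber G (⊤ : SimpleGraph (Fin s)) : ℝ)) := by ring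
        _ ≤ 2*(k:ℝ)*s/t * N := hmul
    have : (((t.choose s)^r * ramseyNumber G (⊤ : SimpleGraph (Fin s)) : ℕ) : ℝ) ≤ (U.card : ℝ) := by
      push_cast
      linarith
    exact_mod_cast this
  -- Step C: pigeonhole
  set pick : Fin N → (Fin r → Finset (Fin N)) := fun u i =>
    if h : s ≤ (A i u).card then (Finset.exists_subset_card_eq (s := A i u) (n := s) h).choose else ∅
    with hpickdef
  have hpick : ∀ u i, s ≤ (A i u).card → pick u i ⊆ A i u ∧ (pick u i).card = s := by
    intro u i h
    simp only [hpickdef, dif_pos h]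
    exact (Finset.exists_subset_card_eq (s := A i u) (n := s) h).choose_spec
  set T := Fintype.piFinset (fun i : Fin r => (V i).powersetCard s) with hT
  have hmaps : ∀ u ∈ U, pick u ∈ T := by
    intro u hu
    rw [hT, Fintype.mem_piFinset]
    intro i
    have hsu := (Finset.mem_filter.1 hu).2 i
    obtain ⟨h1, h2⟩ := hpick u i hsu
    exact Finset.mem_powersetCard.2 ⟨h1.trans (filter_subset _ _), h2⟩
  have hTne : T.Nonempty := by
    have hne : ∀ i : Fin r, ((V i).powersetCard s).Nonempty := fun i => by
      rw [Finset.powersetCard_nonempty, hVcard i]; exact hst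
    exact ⟨fun i => (hne i).choose, Fintype.mem_piFinset.2 fun i => (hne i).choose_spec⟩
  have hTcard : T.card = (t.choose s)^r := by
    rw [hT, Fintype.card_piFinset]
    simp only [Finset.card_powersetCard, hVcard]
    rw [Finset.prod_const, card_univ, Fintype.card_fin]
  obtain ⟨y, hyT, hfib⟩ := Finset.exists_le_card_fiber_of_mul_le_card_of_maps_to hmaps hTne
    (by rw [hTcard]; exact hUR)
  set U' := U.filter (fun u => pick u = y) with hU'
  have hy : ∀ i, y i ⊆ V i ∧ (y i).card = s := by
    intro i
    have := Fintype.mem_piFinset.1 hyT i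
    exact Finset.mem_powersetCard.1 this
  have hyA : ∀ u ∈ U', ∀ i, y i ⊆ A i u := by
    intro u hu i
    obtain ⟨huU, hupick⟩ := Finset.mem_filter.1 hu
    have hsu := (Finset.mem_filter.1 huU).2 i
    rw [← hupick]
    exact (hpick u i hsu).1
  -- Step D: Ramsey inside the fibre
  obtain ⟨w, winj, wmem, wnadj⟩ := ramsey_apply G s Γ hfree U' hfib
  set W0 : Finset (Fin N) := (univ : Finset (Fin s)).image w with hW0
  have hW0card : W0.card = s := by
    rw [hW0, Finset.card_image_of_injective _ winj, card_univ, Fintype.card_fin]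
  have hW0mem : ∀ u ∈ W0, u ∈ U' := by
    intro u hu
    obtain ⟨j, _, rfl⟩ := Finset.mem_image.1 hu
    exact wmem j
  have hUV : ∀ i, ∀ u ∈ U, u ∉ V i := by
    intro i u hu hc
    have hsu := (Finset.mem_filter.1 hu).2 i
    have : (A i u).Nonempty := Finset.card_pos.1 (by omega)
    obtain ⟨v, hv⟩ := this
    obtain ⟨hv1, hv2⟩ := Finset.mem_filter.1 hv
    exact hVind i u hc v hv1 hv2
  have hW0V : ∀ i, Disjoint W0 (V i) := by
    intro i
    rw [Finset.disjoint_left]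
    intro u hu
    exact hUV i u (Finset.mem_of_mem_filter u (hW0mem u hu))
  have hW0adjy : ∀ u ∈ W0, ∀ i, ∀ v ∈ y i, Γ.Adj u v := by
    intro u hu i v hv
    have := hyA u (hW0mem u hu) i hv
    exact (Finset.mem_filter.1 this).2
  have hW0ind : ∀ a ∈ W0, ∀ b ∈ W0, ¬ Γ.Adj a b := by
    intro a ha b hb hadj
    obtain ⟨ja, _, rfl⟩ := Finset.mem_image.1 ha
    obtain ⟨jb, _, rfl⟩ := Finset.mem_image.1 hb
    by_cases hjj : ja = jb
    · subst hjj; exact hadj.ne rfl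
    · exact wnadj ja jb hjj hadj
  -- assemble
  refine ⟨fun j => Fin.cases W0 (fun i => y i) j, ⟨?_, ?_, ?_, ?_⟩, ?_⟩
  · intro i
    induction i using Fin.cases with
    | zero => simpa using hW0card
    | succ i => simpa using (hy i).2
  · intro i j hij
    induction i using Fin.cases with
    | zero =>
      induction j using Fin.cases with
      | zero => exact absurd rfl hij
      | succ j =>
        simp only [Fin.cases_zero, Fin.cases_succ]
        exact Finset.disjoint_of_subset_right (hy j).1 (hW0V j)
    | succ i =>
      induction j using Fin.cases with
      | zero =>
        simp only [Fin.cases_zero, Fin.cases_succ]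
        exact (Finset.disjoint_of_subset_right (hy i).1 (hW0V i)).symm
      | succ j =>
        simp only [Fin.cases_succ]
        have : i ≠ j := fun hc => hij (by rw [hc])
        exact Finset.disjoint_of_subset_left (hy i).1
          (Finset.disjoint_of_subset_right (hy j).1 (hVdisj i j this))
  · intro i
    induction i using Fin.cases with
    | zero =>
      intro a ha b hb
      simp only [Fin.cases_zero] at ha hb
      exact hW0ind a ha b hb
    | succ i =>
      intro a ha b hb
      simp only [Fin.cases_succ] at ha hb
      exact hVind i a ((hy i).1 ha) b ((hy i).1 hb)
  · intro i j hij
    induction i using Fin.cases with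
    | zero =>
      induction j using Fin.cases with
      | zero => exact absurd rfl hij
      | succ j =>
        intro a ha b hb
        simp only [Fin.cases_zero] at ha
        simp only [Fin.cases_succ] at hb
        exact hW0adjy a ha j b hb
    | succ i =>
      induction j using Fin.cases with
      | zero =>
        intro a ha b hb
        simp only [Fin.cases_succ] at ha
        simp only [Fin.cases_zero] at hb
        exact (hW0adjy b hb i a ha).symm
      | succ j =>
        intro a ha b hb
        simp only [Fin.cases_succ] at ha hb
        have : i ≠ j := fun hc => hij (by rw [hc])
        exact hVadj i j this a ((hy i).1 ha) b ((hy j).1 hb)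
  · intro i
    simp only [Fin.cases_succ]
    exact (hy i).1
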